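/- arXiv:1810.00057 — 8 statements merged into one kernel-verified Lean document; each statement's English description precedes it below -/
import Mathlib

section
/- Let K be a field, V a K-vector space, and v : Fin (m+1) → V a family of m+1 vectors whose span has finite dimension m. Suppose there exist scalars c₀,…,c_m ∈ K, all nonzero, with ∑_{i=0}^{m} c_i • v_i = 0. Then for every proper subset S ⊊ Fin (m+1), the subfamily (v_i)_{i∈S} is linearly independent over K. -/
/-- A full-support linear dependency among `m+1` vectors whose span has dimension `m`
forces every proper subfamily to be linearly independent. -/
theorem fullSupportDependency_properSubfamily_linearIndependent
    {K V : Type*} [Field K] [AddCommGroup V] [Module K V] {m : ℕ}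
    (v : Fin (m + 1) → V)
    (hrank : Module.finrank K (Submodule.span K (Set.range v)) = m)
    (c : Fin (m + 1) → K) (hc : ∀ i, c i ≠ 0)
    (hsum : ∑ i, c i • v i = 0) :
    ∀ S : Set (Fin (m + 1)), S ≠ Set.univ →
      LinearIndependent K (fun i : S => v i) := by
  intro S hS
  obtain ⟨j, hj⟩ : ∃ j, j ∉ S := by
    by_contra h; push_neg at h; exact hS (Set.eq_univ_of_forall h)
  -- the span of the other vectors is everything
  have hmem : (∑ k ∈ Finset.univ.erase j, c k • v k) ∈
      Submodule.span K (v '' {i | i ≠ j}) :=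
    Submodule.sum_mem _ fun k hk => Submodule.smul_mem _ _
      (Submodule.subset_span ⟨k, (Finset.mem_erase.mp hk).1, rfl⟩)
  have hvj : v j = (c j)⁻¹ • (-(∑ k ∈ Finset.univ.erase j, c k • v k)) := by
    have h1 : c j • v j + ∑ k ∈ Finset.univ.erase j, c k • v k = 0 := by
      rw [Finset.add_sum_erase _ (fun k => c k • v k) (Finset.mem_univ j)]; exact hsum
    have h2 : c j • v j = -(∑ k ∈ Finset.univ.erase j, c k • v k) := by
      linear_combination (norm := module) h1
    rw [← h2, smul_smul, inv_mul_cancel₀ (hc j), one_smul]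
  have hspan : Submodule.span K (v '' {i | i ≠ j}) =
      Submodule.span K (Set.range v) := by
    apply le_antisymm
    · exact Submodule.span_mono (Set.image_subset_range _ _)
    · rw [Submodule.span_le]
      rintro _ ⟨i, rfl⟩
      by_cases hij : i = j
      · subst hij
        rw [hvj]
        exact Submodule.smul_mem _ _ (Submodule.neg_mem _ hmem)
      · exact Submodule.subset_span ⟨i, hij, rfl⟩
  have hw : LinearIndependent K (fun i : {i | i ≠ j} => v i) := by
    rw [linearIndependent_iff_card_eq_finrank_span]
    have hr : Set.range (fun i : {i | i ≠ j} => v i) = v '' {i | i ≠ j} :=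
      (Set.image_eq_range _ _).symm
    rw [hr, Set.finrank, hspan, hrank]
    simp [Fintype.card_subtype_compl, Finset.filter_ne']
  have hsub : S ⊆ {i | i ≠ j} := fun x hx => fun h => hj (h ▸ hx)
  exact hw.comp (Set.inclusion hsub) (Set.inclusion_injective hsub)
end

section
/- Let K be a field, V and W two K-vector spaces, f : V →ₗ[K] W a linear map, and v : Fin (m+1) → V a super-essential family (its span has dimension m and every proper subfamily is linearly independent). If the span of the image family f ∘ v also has dimension m, then f ∘ v is super-essential: every proper subfamily of (f(v_i))_{i} is linearly independent and the span of the whole image family has dimension m. -/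
/-- The image of a super-essential family under a linear map is super-essential,
provided the image family still has rank `m`. -/
theorem superEssential_image_of_rank_eq
    {K V W : Type*} [Field K] [AddCommGroup V] [Module K V]
    [AddCommGroup W] [Module K W] {m : ℕ}
    (f : V →ₗ[K] W) (v : Fin (m + 1) → V)
    (hrank : Module.finrank K (Submodule.span K (Set.range v)) = m)
    (hind : ∀ S : Set (Fin (m + 1)), S ≠ Set.univ →
      LinearIndependent K (fun i : S => v i))
    (hrank' : Module.finrank K (Submodule.span K (Set.range (f ∘ v))) = m) :
    (∀ S : Set (Fin (m + 1)), S ≠ Set.univ →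
      LinearIndependent K (fun i : S => (f ∘ v) i)) ∧
    Module.finrank K (Submodule.span K (Set.range (f ∘ v))) = m := by
  set U : Submodule K V := Submodule.span K (Set.range v) with hU
  have hfin : FiniteDimensional K U :=
    FiniteDimensional.span_of_finite K (Set.finite_range v)
  -- the image of U under f is the span of the image family
  have hmap : U.map f = Submodule.span K (Set.range (f ∘ v)) := by
    rw [hU, Submodule.map_span, ← Set.range_comp]
  -- f restricted to U
  set g : U →ₗ[K] W := f.comp U.subtype with hg
  have hrangeg : LinearMap.range g = U.map f := by
    rw [hg, LinearMap.range_comp, Submodule.range_subtype]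
  have hfinU : Module.finrank K U = m := hrank
  have hfr : Module.finrank K (LinearMap.range g) = m := by
    rw [hrangeg, hmap]; exact hrank'
  have hker : LinearMap.ker g = ⊥ := by
    have h := LinearMap.finrank_range_add_finrank_ker g
    rw [hfr, hfinU] at h
    have : Module.finrank K (LinearMap.ker g) = 0 := by omega
    exact Submodule.finrank_eq_zero.mp this
  -- hence f is injective on U, i.e. U ⊓ ker f = ⊥
  have hdisj : Disjoint U (LinearMap.ker f) := by
    rw [disjoint_iff_inf_le]
    rintro x ⟨hxU, hxk⟩
    have : (⟨x, hxU⟩ : U) ∈ LinearMap.ker g := by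
      simp [hg, LinearMap.mem_ker] at hxk ⊢; exact hxk
    rw [hker] at this
    simpa using congrArg Subtype.val this
  refine ⟨fun S hS => ?_, hrank'⟩
  have hli := hind S hS
  have hsub : Submodule.span K (Set.range fun i : S => v i) ≤ U := by
    apply Submodule.span_mono
    rintro _ ⟨i, rfl⟩; exact ⟨i, rfl⟩
  have hd : Disjoint (Submodule.span K (Set.range fun i : S => v i))
      (LinearMap.ker f) :=
    disjoint_iff_inf_le.mpr fun x hx => hdisj.le_bot ⟨hsub hx.1, hx.2⟩
  exact hli.map hd
end

section
/- Let K be a field and w : Fin (m+1) → (Fin n → K) a super-essential family of m+1 row vectors in K^n (its span has dimension m and every proper subfamily is linearly independent), where m ≤ n. Then there exists a subset S ⊆ Fin n with |S| = m such that the family of restrictions (w_i|_S : S → K)_{i ∈ Fin (m+1)} is again super-essential: its span has dimension m and every proper subfamily of the restrictions is linearly independent. -/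
open Module Submodule

/-- Column-selection lemma: from a submodule of `K^n` of finrank `m`, one can select `m`
coordinates on which the projection is injective. -/
lemma exists_cols_injective {K : Type*} [Field K] {m n : ℕ}
    (W : Submodule K (Fin n → K)) (hW : Module.finrank K W = m) :
    ∃ S : Finset (Fin n), S.card = m ∧
      ∀ x : W, (∀ j ∈ S, (x : Fin n → K) j = 0) → x = 0 := by
  classical
  set f : Fin n → Module.Dual K W := fun j => (LinearMap.proj j).comp W.subtype with hf
  have hco : (span K (Set.range f)).dualCoannihilator = ⊥ := by
    rw [eq_bot_iff]
    intro x hx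
    rw [Submodule.mem_dualCoannihilator] at hx
    have : ∀ j : Fin n, (x : Fin n → K) j = 0 := fun j =>
      hx (f j) (subset_span (Set.mem_range_self j))
    simpa [Submodule.mem_bot] using Subtype.ext (funext this)
  have hfin : finrank K (span K (Set.range f)) = m := by
    have h := Subspace.finrank_add_finrank_dualCoannihilator_eq (span K (Set.range f))
    rw [hco, finrank_bot, add_zero, hW] at h
    exact h
  obtain ⟨b, hbsub, hbspan, hbind⟩ := exists_linearIndependent K (Set.range f)
  have hbfin : b.Finite := (Set.finite_range f).subset hbsub
  haveI : Fintype b := hbfin.fintype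
  have hbcard : b.toFinset.card = m := by
    have := finrank_span_set_eq_card (R := K) hbind
    rw [hbspan, hfin] at this
    exact this.symm
  choose g hg using fun φ : b => (hbsub φ.2 : φ.1 ∈ Set.range f)
  have ginj : Function.Injective g := by
    intro φ₁ φ₂ h
    have : f (g φ₁) = f (g φ₂) := by rw [h]
    rw [hg, hg] at this
    exact Subtype.ext this
  refine ⟨Finset.univ.image g, ?_, ?_⟩
  · rw [Finset.card_image_of_injective _ ginj, Finset.card_univ, ← hbcard]
    simp [Set.toFinset_card]
  · intro x hx
    have hxb : ∀ φ ∈ b, φ x = 0 := by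
      intro φ hφ
      have := hg ⟨φ, hφ⟩
      have hgx : (x : Fin n → K) (g ⟨φ, hφ⟩) = 0 :=
        hx _ (Finset.mem_image_of_mem g (Finset.mem_univ _))
      calc φ x = f (g ⟨φ, hφ⟩) x := by rw [this]
        _ = 0 := hgx
    have hmem : x ∈ (span K b).dualCoannihilator := by
      have := Submodule.coe_dualCoannihilator_span (R := K) b
      rw [Set.ext_iff] at this
      exact (this x).2 hxb
    rw [hbspan, hco] at hmem
    exact hmem

/-- For a super-essential family of `m+1` row vectors in `K^n` (`m ≤ n`), one can select
`m` columns so that the restricted family is again super-essential. -/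
theorem superEssential_restrict_columns
    {K : Type*} [Field K] {m n : ℕ} (hmn : m ≤ n)
    (w : Fin (m + 1) → (Fin n → K))
    (hrank : Module.finrank K (Submodule.span K (Set.range w)) = m)
    (hind : ∀ S : Set (Fin (m + 1)), S ≠ Set.univ →
      LinearIndependent K (fun i : S => w i)) :
    ∃ S : Finset (Fin n), S.card = m ∧
      Module.finrank K (Submodule.span K
        (Set.range (fun i : Fin (m + 1) => fun j : S => w i j.1))) = m ∧
      ∀ T : Set (Fin (m + 1)), T ≠ Set.univ →
        LinearIndependent K (fun i : T => fun j : S => w i.1 j.1) := by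
  classical
  set W : Submodule K (Fin n → K) := Submodule.span K (Set.range w) with hWdef
  obtain ⟨S, hScard, hSinj⟩ := exists_cols_injective W hrank
  set π : (Fin n → K) →ₗ[K] (S → K) :=
    LinearMap.funLeft K K (fun j : S => (j : Fin n)) with hπ
  have hdisj : Disjoint W (LinearMap.ker π) := by
    rw [disjoint_iff, eq_bot_iff]
    intro x hx
    obtain ⟨hxW, hxk⟩ := Submodule.mem_inf.mp hx
    rw [LinearMap.mem_ker] at hxk
    have : ∀ j ∈ S, x j = 0 := by
      intro j hj
      have := congrFun hxk ⟨j, hj⟩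
      exact this
    have := hSinj ⟨x, hxW⟩ this
    simpa [Submodule.mem_bot] using congrArg Subtype.val this
  have hinjW : Function.Injective (π.comp W.subtype) := by
    rw [← LinearMap.ker_eq_bot, eq_bot_iff]
    intro x hx
    rw [LinearMap.mem_ker, LinearMap.comp_apply] at hx
    refine (Submodule.mem_bot K).mpr (hSinj x fun j hj => ?_)
    exact congrFun hx ⟨j, hj⟩
  refine ⟨S, hScard, ?_, ?_⟩
  · have hmap : Submodule.span K
        (Set.range (fun i : Fin (m + 1) => fun j : S => w i j.1)) = W.map π := by
      have h1 : (Set.range (fun i : Fin (m + 1) => fun j : S => w i j.1))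
          = π '' (Set.range w) := by
        rw [← Set.range_comp]
        rfl
      rw [h1, ← Submodule.span_image]
    rw [hmap]
    have hr : W.map π = LinearMap.range (π.comp W.subtype) := by
      rw [LinearMap.range_comp, Submodule.range_subtype]
    rw [hr, LinearMap.finrank_range_of_inj hinjW, hrank]
  · intro T hT
    have hv : LinearIndependent K (fun i : T => w i) := hind T hT
    have hle : Submodule.span K (Set.range (fun i : T => w i)) ≤ W := by
      rw [hWdef]
      exact Submodule.span_mono (Set.range_comp_subset_range _ _)
    have := hv.map (f := π) (Disjoint.mono_left hle hdisj)
    exact this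
end

section
/- Let K be a field, V and W two K-vector spaces, f : V →ₗ[K] W a linear map, and w : Fin (m+1) → V a family of m+1 vectors such that the span of the image family f ∘ w has dimension m. Suppose there exist scalars c₀,…,c_m ∈ K with ∑_{i=0}^{m} c_i • f(w_i) = 0 but ∑_{i=0}^{m} c_i • w_i ≠ 0. Then the family w₀,…,w_m is linearly independent over K. -/
/-- If the images `f (w i)` have rank `m` and satisfy a dependency that the `w i` themselves
do not satisfy, then the family `w` is linearly independent. -/
theorem linearIndependent_of_image_dependency
    {K V W : Type*} [Field K] [AddCommGroup V] [Module K V]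
    [AddCommGroup W] [Module K W] {m : ℕ}
    (f : V →ₗ[K] W) (w : Fin (m + 1) → V)
    (hrank : Module.finrank K (Submodule.span K (Set.range (f ∘ w))) = m)
    (c : Fin (m + 1) → K)
    (hdep : ∑ i, c i • f (w i) = 0)
    (hne : ∑ i, c i • w i ≠ 0) :
    LinearIndependent K w := by
  set φ : (Fin (m + 1) → K) →ₗ[K] W := Fintype.linearCombination K (f ∘ w) with hφ
  have hφapp : ∀ d : Fin (m + 1) → K, φ d = ∑ i, d i • f (w i) := by
    intro d; simp [hφ, Fintype.linearCombination_apply]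
  have hrange : Module.finrank K (LinearMap.range φ) = m := by
    rw [hφ, Fintype.range_linearCombination]; exact hrank
  have hrn := LinearMap.finrank_range_add_finrank_ker φ
  rw [hrange, Module.finrank_fin_fun] at hrn
  have hker : Module.finrank K (LinearMap.ker φ) = 1 := by omega
  have hc0 : c ≠ 0 := by
    intro h; apply hne; simp [h]
  have hcker : c ∈ LinearMap.ker φ := by
    rw [LinearMap.mem_ker, hφapp]; exact hdep
  have hspan : Submodule.span K {c} = LinearMap.ker φ := by
    apply Submodule.eq_of_le_of_finrank_eq
    · rwa [Submodule.span_singleton_le_iff_mem]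
    · rw [finrank_span_singleton hc0, hker]
  rw [Fintype.linearIndependent_iff]
  intro d hd
  have hdker : d ∈ LinearMap.ker φ := by
    rw [LinearMap.mem_ker, hφapp]
    rw [show (∑ i, d i • f (w i)) = f (∑ i, d i • w i) by simp, hd, map_zero]
  rw [← hspan, Submodule.mem_span_singleton] at hdker
  obtain ⟨t, rfl⟩ := hdker
  have : t • ∑ i, c i • w i = 0 := by
    rw [Finset.smul_sum]
    simpa [Pi.smul_apply, smul_smul] using hd
  rcases smul_eq_zero.mp this with h | h
  · simp [h]
  · exact absurd h hne
end

section
/- Let K be a field, V a K-vector space, and v : Fin (n+1) → V a family of n+1 vectors whose span has finite dimension n. Then there exists a unique subset T ⊆ Fin (n+1) such that |T| = dim span{v_i : i ∈ T} + 1 and for every proper subset J ⊊ T the subfamily (v_i)_{i∈J} is linearly independent. -/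
open Module Submodule

/-- If `n+1` vectors span a space of dimension `n`, then there is a unique super-essential
index subset `T`: `|T|` exceeds the rank of the subfamily indexed by `T` by exactly 1,
and every proper subset of `T` indexes a linearly independent subfamily. -/
theorem existsUnique_superEssential_subset
    {K V : Type*} [Field K] [AddCommGroup V] [Module K V] {n : ℕ}
    (v : Fin (n + 1) → V)
    (hrank : Module.finrank K (Submodule.span K (Set.range v)) = n) :
    ∃! T : Finset (Fin (n + 1)),
      T.card = Module.finrank K (Submodule.span K (v '' ↑T)) + 1 ∧
      ∀ J : Finset (Fin (n + 1)), J ⊂ T →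
        LinearIndependent K (fun i : J => v i.1) := by
  classical
  set f : (Fin (n + 1) → K) →ₗ[K] V := Fintype.linearCombination K v with hf
  -- range of images
  have hrange : ∀ J : Finset (Fin (n + 1)),
      Set.range (fun i : J => v i.1) = v '' ↑J := by
    intro J
    rw [show (fun i : J => v i.1) = v ∘ Subtype.val from rfl, Set.range_comp,
      Subtype.range_val]
  -- the kernel has dimension 1
  have hker : finrank K (LinearMap.ker f) = 1 := by
    have h1 := LinearMap.finrank_range_add_finrank_ker f
    rw [Fintype.range_linearCombination, hrank,
      Module.finrank_pi, Fintype.card_fin] at h1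
    omega
  have : Nontrivial (LinearMap.ker f) := by
    rw [← finrank_pos_iff (R := K)]; omega
  obtain ⟨c0, hc0⟩ := exists_ne (0 : LinearMap.ker f)
  have hall : ∀ w : LinearMap.ker f, ∃ a : K, a • c0 = w :=
    (finrank_eq_one_iff_of_nonzero' c0 hc0).mp hker
  set c : Fin (n + 1) → K := (c0 : Fin (n + 1) → K) with hcdef
  have hcne : c ≠ 0 := fun h => hc0 (Subtype.ext h)
  have hcker : ∑ i, c i • v i = 0 := c0.2
  set S : Finset (Fin (n + 1)) := Finset.univ.filter (fun i => c i ≠ 0) with hS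
  have hmemS : ∀ i, i ∈ S ↔ c i ≠ 0 := by
    intro i; simp [hS]
  -- key characterization
  have key : ∀ J : Finset (Fin (n + 1)),
      LinearIndependent K (fun i : J => v i.1) ↔ ¬ S ⊆ J := by
    intro J
    constructor
    · intro hind hSJ
      have hsum : ∑ i : J, c i.1 • v i.1 = 0 := by
        rw [Finset.sum_coe_sort J (fun i => c i • v i)]
        rw [← hcker]
        apply Finset.sum_subset (Finset.subset_univ J)
        intro x _ hx
        have : c x = 0 := by
          by_contra h
          exact hx (hSJ ((hmemS x).mpr h))
        rw [this, zero_smul]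
      obtain ⟨i, hi⟩ : ∃ i, c i ≠ 0 := by
        by_contra h
        push_neg at h
        exact hcne (funext h)
      have hiJ : i ∈ J := hSJ ((hmemS i).mpr hi)
      exact hi (Fintype.linearIndependent_iff.mp hind (fun j => c j.1) hsum ⟨i, hiJ⟩)
    · intro hSJ
      rw [Fintype.linearIndependent_iff]
      intro g hg
      set d : Fin (n + 1) → K := fun i => if h : i ∈ J then g ⟨i, h⟩ else 0 with hd
      have hdker : f d = 0 := by
        rw [hf, Fintype.linearCombination_apply]
        have : ∑ i, d i • v i = ∑ i : J, g i • v i.1 := by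
          rw [← Finset.sum_subset (Finset.subset_univ J)
              (fun x _ hx => by simp [hd, hx]),
            ← Finset.sum_coe_sort J (fun i => d i • v i)]
          exact Finset.sum_congr rfl fun x _ => by simp [hd, x.2]
        rw [this, hg]
      obtain ⟨a, ha⟩ := hall ⟨d, hdker⟩
      have had : a • c = d := congrArg Subtype.val ha
      by_cases haz : a = 0
      · intro i
        have : d i.1 = 0 := by rw [← had, haz, zero_smul]; rfl
        simpa [hd, i.2] using this
      · exfalso
        apply hSJ
        intro i hi
        have hci : c i ≠ 0 := (hmemS i).mp hi
        have : d i ≠ 0 := by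
          rw [← had]
          exact mul_ne_zero haz hci
        by_contra hiJ
        exact this (by simp [hd, hiJ])
  -- any finset whose proper subsets are independent and that satisfies
  -- the cardinality condition equals S ; and S satisfies everything
  have hSne : S.Nonempty := by
    obtain ⟨i, hi⟩ : ∃ i, c i ≠ 0 := by
      by_contra h; push_neg at h; exact hcne (funext h)
    exact ⟨i, (hmemS i).mpr hi⟩
  have hproperS : ∀ J : Finset (Fin (n + 1)), J ⊂ S →
      LinearIndependent K (fun i : J => v i.1) := by
    intro J hJ
    rw [key]
    exact fun h => hJ.2 h
  have hScard : S.card = finrank K (span K (v '' ↑S)) + 1 := by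
    obtain ⟨i, hi⟩ := id hSne
    have hlt : finrank K (span K (v '' ↑S)) < S.card := by
      by_contra h
      push_neg at h
      have hle : finrank K (span K (v '' ↑S)) ≤ S.card := by
        have h1 := finrank_span_le_card (R := K) (v '' ↑S)
        have h2 : (v '' ↑S).toFinset.card ≤ S.card := by
          rw [Set.toFinset_image]
          exact (Finset.card_image_le).trans (by simp)
        omega
      have heq : S.card = finrank K (span K (v '' ↑S)) := le_antisymm h hle
      have : LinearIndependent K (fun i : S => v i.1) := by
        rw [linearIndependent_iff_card_eq_finrank_span, hrange, Set.finrank]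
        rw [Fintype.card_coe]
        exact heq
      exact (key S).mp this (le_refl S)
    have hge : S.card - 1 ≤ finrank K (span K (v '' ↑S)) := by
      have herase : (S.erase i) ⊂ S := Finset.erase_ssubset hi
      have hind := hproperS _ herase
      have hcard : finrank K (span K (v '' ↑(S.erase i))) = (S.erase i).card := by
        have := finrank_span_eq_card (R := K) hind
        rw [hrange, Fintype.card_coe] at this
        exact this
      have hmono : finrank K (span K (v '' ↑(S.erase i))) ≤
          finrank K (span K (v '' ↑S)) := by
        have : FiniteDimensional K (span K (v '' ↑S)) := by
          apply FiniteDimensional.span_of_finite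
          exact (S.finite_toSet.image v)
        exact Submodule.finrank_mono (span_mono (Set.image_mono (by simp)))
      rw [hcard, Finset.card_erase_of_mem hi] at hmono
      exact hmono
    have hpos : 1 ≤ S.card := Finset.card_pos.mpr hSne
    omega
  refine ⟨S, ⟨hScard, hproperS⟩, ?_⟩
  rintro T ⟨hTcard, hTproper⟩
  -- T is dependent, so S ⊆ T
  have hTdep : ¬ LinearIndependent K (fun i : T => v i.1) := by
    intro hind
    have := finrank_span_eq_card (R := K) hind
    rw [hrange, Fintype.card_coe] at this
    omega
  have hST : S ⊆ T := by
    by_contra h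
    exact hTdep ((key T).mpr h)
  -- T ⊆ S
  have hTS : T ⊆ S := by
    intro i hi
    by_contra hiS
    have herase : (T.erase i) ⊂ T := Finset.erase_ssubset hi
    have hind := hTproper _ herase
    apply (key _).mp hind
    intro j hj
    exact Finset.mem_erase.mpr ⟨fun h => hiS (h ▸ hj), hST hj⟩
  exact le_antisymm hTS hST
end

section
/- Let K be a field, V a K-vector space, and v : Fin (n+1) → V a family of n+1 vectors whose span has finite dimension n. Then there exists a subset T ⊆ Fin (n+1) such that for every subset S ⊆ Fin (n+1), the subfamily (v_i)_{i∈S} is linearly dependent if and only if T ⊆ S. -/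
/-- If `n+1` vectors span a space of dimension `n`, then there is an index subset `T`
such that a subfamily is linearly dependent exactly when its index set contains `T`. -/
theorem exists_minimal_dependent_subset
    {K V : Type*} [Field K] [AddCommGroup V] [Module K V] {n : ℕ}
    (v : Fin (n + 1) → V)
    (hrank : Module.finrank K (Submodule.span K (Set.range v)) = n) :
    ∃ T : Finset (Fin (n + 1)), ∀ S : Finset (Fin (n + 1)),
      (¬ LinearIndependent K (fun i : S => v i.1)) ↔ T ⊆ S := by
  classical
  set φ : (Fin (n + 1) → K) →ₗ[K] V := Fintype.linearCombination K v with hφ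
  have hrange : LinearMap.range φ = Submodule.span K (Set.range v) :=
    Fintype.range_linearCombination K v
  have hrn : Module.finrank K (LinearMap.range φ) + Module.finrank K (LinearMap.ker φ)
      = n + 1 := by
    rw [LinearMap.finrank_range_add_finrank_ker φ]
    simp [Module.finrank_pi]
  have hker : Module.finrank K (LinearMap.ker φ) = 1 := by
    rw [hrange, hrank] at hrn
    omega
  obtain ⟨c, hc0, hcspan⟩ := finrank_eq_one_iff'.mp hker
  refine ⟨Finset.univ.filter (fun i => c.1 i ≠ 0), fun S => ?_⟩
  have hcker : φ c.1 = 0 := c.2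
  constructor
  · intro hdep
    rw [Fintype.not_linearIndependent_iff] at hdep
    obtain ⟨g, hg0, i0, hi0⟩ := hdep
    set d : Fin (n + 1) → K := fun i => if h : i ∈ S then g ⟨i, h⟩ else 0 with hd
    have hdker : φ d = 0 := by
      rw [hφ, Fintype.linearCombination_apply,
        ← Finset.sum_subset (Finset.subset_univ S) (by intro i _ hi; simp [hd, hi]),
        ← Finset.sum_attach S (fun i => d i • v i), ← hg0]
      apply Finset.sum_congr rfl
      intro i _
      simp [hd, i.2]
    obtain ⟨a, ha⟩ := hcspan ⟨d, hdker⟩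
    have ha' : a • c.1 = d := congrArg Subtype.val ha
    have hane : a ≠ 0 := by
      rintro rfl
      apply hi0
      have := congrFun ha' i0
      simp at this
      simpa [hd, i0.2] using this.symm
    intro i hi
    simp only [Finset.mem_filter, Finset.mem_univ, true_and] at hi
    by_contra hiS
    have hmul : a * c.1 i = 0 := by simpa [hd, hiS] using congrFun ha' i
    exact hi ((mul_eq_zero.mp hmul).resolve_left hane)
  · intro hTS hLI
    rw [Fintype.linearIndependent_iff] at hLI
    have h0 : ∑ i : Fin (n + 1), c.1 i • v i = 0 := hcker
    have hzero : ∀ i : S, c.1 i.1 = 0 := by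
      apply hLI
      calc ∑ i : {x // x ∈ S}, c.1 i.1 • v i.1
          = ∑ i ∈ S, c.1 i • v i := Finset.sum_attach S (fun i => c.1 i • v i)
        _ = ∑ i : Fin (n + 1), c.1 i • v i := by
            refine Finset.sum_subset (Finset.subset_univ S) ?_
            intro i _ hi
            have : c.1 i = 0 := by
              by_contra h
              exact hi (hTS (by simp [h]))
            simp [this]
        _ = 0 := h0
    apply hc0
    apply Subtype.ext
    funext i
    simp only [ZeroMemClass.coe_zero, Pi.zero_apply]
    by_cases h : i ∈ S
    · exact hzero ⟨i, h⟩
    · by_contra hne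
      exact h (hTS (by simp [hne]))
end

section
/- Let F be a field and M a p × q matrix whose entries are polynomials in MvPolynomial (Fin k) F. Let K be the fraction field of MvPolynomial (Fin k) F and let r be the rank of M viewed as a matrix over K. Then there exists a nonzero polynomial g ∈ MvPolynomial (Fin k) F such that for every point a : Fin k → F with g(a) ≠ 0, the rank (over F) of the matrix obtained by evaluating every entry of M at a equals r. -/
open Matrix

set_option maxHeartbeats 1000000

/-- If `s ≤ rank A`, then there are `s` columns of `A` that are linearly independent. -/
lemma aux_exists_li_cols {L : Type*} [Field L] {p q s : ℕ}
    (A : Matrix (Fin p) (Fin q) L) (hs : s ≤ A.rank) :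
    ∃ g : Fin s → Fin q, LinearIndependent L (fun j => Aᵀ (g j)) := by
  classical
  rw [Matrix.rank_eq_finrank_span_cols] at hs
  obtain ⟨t, hts, hsp, hli⟩ := exists_linearIndependent L (Set.range Aᵀ)
  have htfin : t.Finite := (Set.finite_range Aᵀ).subset hts
  haveI : Fintype t := htfin.fintype
  have hcard : s ≤ Fintype.card t := by
    have h2 := finrank_span_set_eq_card hli
    rw [hsp] at h2
    rw [Matrix.col, h2, Set.toFinset_card] at hs
    exact hs
  obtain ⟨e⟩ : Nonempty (Fin s ↪ t) := by
    rw [← Fintype.card_fin s] at hcard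
    exact Function.Embedding.nonempty_of_card_le hcard
  have hmem : ∀ j : Fin s, (↑(e j) : Fin p → L) ∈ Set.range Aᵀ := fun j => hts (e j).2
  choose g hg using fun j => hmem j
  refine ⟨g, ?_⟩
  have : (fun j => Aᵀ (g j)) = fun j => (↑(e j) : Fin p → L) := funext fun j => hg j
  rw [this]
  exact hli.comp e e.injective

/-- If `s ≤ rank A`, then `A` has a nonzero `s × s` minor. -/
lemma aux_exists_minor {L : Type*} [Field L] {p q s : ℕ}
    (A : Matrix (Fin p) (Fin q) L) (hs : s ≤ A.rank) :
    ∃ (f : Fin s → Fin p) (g : Fin s → Fin q), (A.submatrix f g).det ≠ 0 := by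
  classical
  obtain ⟨g, hg⟩ := aux_exists_li_cols A hs
  set B : Matrix (Fin p) (Fin s) L := A.submatrix id g with hB
  have hBT : Bᵀ = fun j => Aᵀ (g j) := by
    ext j i; simp [hB, Matrix.transpose_apply]
  have hrankB : B.rank = s := by
    rw [Matrix.rank_eq_finrank_span_cols, Matrix.col, hBT, finrank_span_eq_card hg, Fintype.card_fin]
  have hrankBT : s ≤ Bᵀ.rank := by rw [Matrix.rank_transpose, hrankB]
  obtain ⟨f, hf⟩ := aux_exists_li_cols Bᵀ hrankBT
  have hrows : (fun i => Bᵀᵀ (f i)) = fun i => B (f i) := by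
    simp [Matrix.transpose_transpose]
  rw [hrows] at hf
  refine ⟨f, g, ?_⟩
  have hrows2 : LinearIndependent L (fun i => (B.submatrix f id) i) := by
    have : (fun i => (B.submatrix f id) i) = fun i => B (f i) := by
      ext i j; simp
    rw [this]; exact hf
  have hu : IsUnit (B.submatrix f id) := Matrix.linearIndependent_rows_iff_isUnit.mp hrows2
  have : B.submatrix f id = A.submatrix f g := by
    ext i j; simp [hB]
  rw [← this]
  exact (Matrix.isUnit_iff_isUnit_det _).mp hu |>.ne_zero

/-- A nonzero `s × s` minor forces `s ≤ rank A`. -/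
lemma aux_rank_ge_of_minor {L : Type*} [Field L] {p q s : ℕ}
    (A : Matrix (Fin p) (Fin q) L) (f : Fin s → Fin p) (g : Fin s → Fin q)
    (h : (A.submatrix f g).det ≠ 0) : s ≤ A.rank := by
  classical
  set P : Matrix (Fin s) (Fin p) L := Matrix.of fun i k => if f i = k then 1 else 0 with hP
  set Q : Matrix (Fin q) (Fin s) L := Matrix.of fun k j => if k = g j then 1 else 0 with hQ
  have hfac : A.submatrix f g = P * A * Q := by
    ext i j
    simp only [Matrix.mul_apply, hP, hQ, Matrix.of_apply, Matrix.submatrix_apply,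
      ite_mul, one_mul, zero_mul, mul_ite, mul_one, mul_zero]
    simp [Finset.sum_ite_eq, Finset.sum_ite_eq']
  have hu : IsUnit (A.submatrix f g) :=
    (Matrix.isUnit_iff_isUnit_det _).mpr (isUnit_iff_ne_zero.mpr h)
  have h1 : (A.submatrix f g).rank = s := by
    rw [Matrix.rank_of_isUnit _ hu, Fintype.card_fin]
  calc s = (A.submatrix f g).rank := h1.symm
    _ = (P * A * Q).rank := by rw [hfac]
    _ ≤ (P * A).rank := Matrix.rank_mul_le_left _ _
    _ ≤ A.rank := Matrix.rank_mul_le_right _ _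

lemma aux_det_map {R S : Type*} [CommRing R] [CommRing S] {s : ℕ}
    (f : R →+* S) (A : Matrix (Fin s) (Fin s) R) :
    (A.map f).det = f A.det := by
  rw [RingHom.map_det]; rfl

/-- Outside the zero set of a suitable nonzero polynomial, evaluating a symbolic matrix
preserves its rank. -/
theorem exists_generic_rank_preserving_evaluation
    {F : Type*} [Field F] {p q k r : ℕ}
    (M : Matrix (Fin p) (Fin q) (MvPolynomial (Fin k) F))
    (hr : (M.map (algebraMap (MvPolynomial (Fin k) F)
      (FractionRing (MvPolynomial (Fin k) F)))).rank = r) :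
    ∃ g : MvPolynomial (Fin k) F, g ≠ 0 ∧
      ∀ a : Fin k → F, MvPolynomial.eval a g ≠ 0 →
        (M.map (MvPolynomial.eval a)).rank = r := by
  classical
  have hφ : Function.Injective (algebraMap (MvPolynomial (Fin k) F)
      (FractionRing (MvPolynomial (Fin k) F))) :=
    IsFractionRing.injective _ _
  obtain ⟨f, g, hfg⟩ := aux_exists_minor (M.map (algebraMap (MvPolynomial (Fin k) F)
      (FractionRing (MvPolynomial (Fin k) F)))) hr.ge
  have hsub : ∀ (s : ℕ) (f' : Fin s → Fin p) (g' : Fin s → Fin q),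
      ((M.map (algebraMap (MvPolynomial (Fin k) F)
        (FractionRing (MvPolynomial (Fin k) F)))).submatrix f' g')
        = ((M.submatrix f' g').map (algebraMap (MvPolynomial (Fin k) F)
        (FractionRing (MvPolynomial (Fin k) F)))) := by
    intro s f' g'; rw [Matrix.submatrix_map]
  have hsub2 : ∀ (s : ℕ) (f' : Fin s → Fin p) (g' : Fin s → Fin q) (a : Fin k → F),
      ((M.map (MvPolynomial.eval a)).submatrix f' g')
        = ((M.submatrix f' g').map (MvPolynomial.eval a)) := by
    intro s f' g' a; rw [Matrix.submatrix_map]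
  have hdne : (M.submatrix f g).det ≠ 0 := by
    intro h0
    apply hfg
    rw [hsub r f g, aux_det_map, h0, map_zero]
  refine ⟨(M.submatrix f g).det, hdne, fun a ha => ?_⟩
  have hlow : r ≤ (M.map (MvPolynomial.eval a)).rank := by
    apply aux_rank_ge_of_minor _ f g
    rw [hsub2 r f g a, aux_det_map]
    exact ha
  have hhigh : (M.map (MvPolynomial.eval a)).rank ≤ r := by
    by_contra hcon
    push_neg at hcon
    obtain ⟨f', g', hfg'⟩ := aux_exists_minor (M.map (MvPolynomial.eval a)) hcon
    have hzero : (M.submatrix f' g').det = 0 := by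
      by_contra hne
      have h1 : ((M.submatrix f' g').map (algebraMap (MvPolynomial (Fin k) F)
          (FractionRing (MvPolynomial (Fin k) F)))).det ≠ 0 := by
        rw [aux_det_map]
        exact fun h => hne (hφ (h.trans (map_zero _).symm))
      rw [← hsub (r+1) f' g'] at h1
      have h2 := aux_rank_ge_of_minor (M.map (algebraMap (MvPolynomial (Fin k) F)
        (FractionRing (MvPolynomial (Fin k) F)))) f' g' h1
      omega
    apply hfg'
    rw [hsub2 (r+1) f' g' a, aux_det_map, hzero, map_zero]
  omega
end

section
/- Let M be a p × q matrix whose entries are polynomials in MvPolynomial (Fin k) ℂ, and let K be the fraction field of MvPolynomial (Fin k) ℂ. Then there exists an integer point a : Fin k → ℤ such that the rank (over ℂ) of the matrix obtained by evaluating every entry of M at the complex point (fun i => (a i : ℂ)) equals the rank (over K) of M viewed as a matrix over K. -/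
open Matrix

/-- A complex multivariate polynomial vanishing at every integer point is zero. -/
lemma mv_int_dense {k : ℕ} (P : MvPolynomial (Fin k) ℂ)
    (h : ∀ a : Fin k → ℤ, MvPolynomial.eval (fun i => (a i : ℂ)) P = 0) : P = 0 := by
  induction k with
  | zero =>
    apply MvPolynomial.funext (R := ℂ)
    intro x
    rw [map_zero]
    have hx : x = fun i : Fin 0 => ((finZeroElim (α := fun _ => ℤ) i : ℤ) : ℂ) :=
      funext fun i => isEmptyElim i
    rw [hx]
    exact h finZeroElim
  | succ n ih =>
    apply (MvPolynomial.finSuccEquiv ℂ n).injective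
    rw [map_zero]
    ext j : 1
    rw [Polynomial.coeff_zero]
    apply ih
    intro a
    have hq : Polynomial.map (MvPolynomial.eval (fun i => ((a i : ℤ) : ℂ)))
        (MvPolynomial.finSuccEquiv ℂ n P) = 0 := by
      apply Polynomial.eq_zero_of_infinite_isRoot
      apply Set.infinite_of_injective_forall_mem
        (f := fun t : ℤ => (t : ℂ)) Int.cast_injective
      intro t
      have key := MvPolynomial.eval_eq_eval_mv_eval'
        (fun i => ((a i : ℤ) : ℂ)) ((t : ℤ) : ℂ) P
      have hpt := h (Fin.cons t a)
      have hfun : (fun i => (((Fin.cons t a : Fin (n + 1) → ℤ) i : ℤ) : ℂ))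
          = Fin.cons ((t : ℤ) : ℂ) (fun i => ((a i : ℤ) : ℂ)) := by
        funext i
        refine Fin.cases ?_ ?_ i <;> simp
      rw [hfun, key] at hpt
      exact hpt
    have := congrArg (fun Q => Polynomial.coeff Q j) hq
    simpa [Polynomial.coeff_map] using this

/-- If a square submatrix has nonzero determinant, its size bounds the rank. -/
lemma le_rank_of_minor {F : Type*} [Field F] {p q s : ℕ}
    (M : Matrix (Fin p) (Fin q) F) (f : Fin s → Fin p) (g : Fin s → Fin q)
    (h : (M.submatrix f g).det ≠ 0) : s ≤ M.rank := by
  have hfac : M.submatrix f g =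
      ((1 : Matrix (Fin p) (Fin p) F).submatrix f id * M) *
        (1 : Matrix (Fin q) (Fin q) F).submatrix id g := by
    ext i j
    simp [Matrix.mul_apply, Matrix.one_apply, Finset.sum_ite_eq, Finset.sum_ite_eq']
  have hunit : IsUnit (M.submatrix f g) :=
    (Matrix.isUnit_iff_isUnit_det _).mpr (isUnit_iff_ne_zero.mpr h)
  have h1 : (M.submatrix f g).rank = s := by
    rw [Matrix.rank_of_isUnit _ hunit, Fintype.card_fin]
  calc s = (M.submatrix f g).rank := h1.symm
    _ ≤ ((1 : Matrix (Fin p) (Fin p) F).submatrix f id * M).rank := by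
        rw [hfac]; exact Matrix.rank_mul_le_left _ _
    _ ≤ M.rank := Matrix.rank_mul_le_right _ _

/-- One can select `rank` many linearly independent columns. -/
lemma exists_linearIndependent_cols {F : Type*} [Field F] {p q : ℕ}
    (A : Matrix (Fin p) (Fin q) F) :
    ∃ g : Fin A.rank → Fin q, LinearIndependent F (fun i => Aᵀ (g i)) := by
  obtain ⟨b, hbsub, hspan, hli⟩ := exists_linearIndependent F (Set.range Aᵀ)
  haveI : Fintype b := ((Set.finite_range Aᵀ).subset hbsub).fintype
  have hcard : Fintype.card b = A.rank := by
    rw [Matrix.rank_eq_finrank_span_cols]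
    change Fintype.card b = Module.finrank F (Submodule.span F (Set.range Aᵀ))
    rw [← hspan]
    rw [finrank_span_set_eq_card hli]
    simp [Set.toFinset_card]
  let e : Fin A.rank ≃ b := (Fintype.equivFinOfCardEq hcard).symm
  have hmem : ∀ i : Fin A.rank, ((e i : Fin p → F)) ∈ Set.range Aᵀ :=
    fun i => hbsub (e i).2
  choose g hg using fun i => hmem i
  refine ⟨g, ?_⟩
  have : (fun i => Aᵀ (g i)) = (fun x : b => (x : Fin p → F)) ∘ e := by
    funext i; simp [hg i]
  rw [this]
  exact hli.comp e e.injective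

/-- A matrix over a field has a nonzero minor of size its rank. -/
lemma exists_minor_det_ne_zero {F : Type*} [Field F] {p q : ℕ}
    (M : Matrix (Fin p) (Fin q) F) :
    ∃ (f : Fin M.rank → Fin p) (g : Fin M.rank → Fin q),
      (M.submatrix f g).det ≠ 0 := by
  obtain ⟨g, hg⟩ := exists_linearIndependent_cols M
  let N : Matrix (Fin p) (Fin M.rank) F := M.submatrix id g
  have hliNT : LinearIndependent F Nᵀ := hg
  have hNTrank : Nᵀ.rank = M.rank := by
    rw [show Nᵀ.rank = _ from hliNT.rank_matrix, Fintype.card_fin]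
  obtain ⟨f₀, hf₀⟩ := exists_linearIndependent_cols Nᵀ
  let f : Fin M.rank → Fin p := f₀ ∘ Fin.cast hNTrank.symm
  have hlirows : LinearIndependent F (fun i => Nᵀᵀ (f i)) :=
    hf₀.comp (Fin.cast hNTrank.symm) (Fin.cast_injective _)
  have hliS : LinearIndependent F (fun i => (M.submatrix f g) i) := hlirows
  have hunit : IsUnit (M.submatrix f g) :=
    Matrix.linearIndependent_rows_iff_isUnit.mp hliS
  exact ⟨f, g, isUnit_iff_ne_zero.mp ((Matrix.isUnit_iff_isUnit_det _).mp hunit)⟩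

/-- There is an integer point at which evaluating a symbolic complex matrix
preserves its rank. -/
theorem exists_int_point_rank_preserving
    {p q k : ℕ}
    (M : Matrix (Fin p) (Fin q) (MvPolynomial (Fin k) ℂ)) :
    ∃ a : Fin k → ℤ,
      (M.map (MvPolynomial.eval (fun i => (a i : ℂ)))).rank =
        (M.map (algebraMap (MvPolynomial (Fin k) ℂ)
          (FractionRing (MvPolynomial (Fin k) ℂ)))).rank := by
  classical
  have hφ : Function.Injective
      (algebraMap (MvPolynomial (Fin k) ℂ) (FractionRing (MvPolynomial (Fin k) ℂ))) :=
    IsFractionRing.injective _ _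
  obtain ⟨f, g, hdet⟩ := exists_minor_det_ne_zero
    (M.map (algebraMap (MvPolynomial (Fin k) ℂ) (FractionRing (MvPolynomial (Fin k) ℂ))))
  have hdetφ : ∀ {s : ℕ} (f' : Fin s → Fin p) (g' : Fin s → Fin q),
      (((M.map (algebraMap (MvPolynomial (Fin k) ℂ)
          (FractionRing (MvPolynomial (Fin k) ℂ)))).submatrix f' g')).det =
        algebraMap (MvPolynomial (Fin k) ℂ) (FractionRing (MvPolynomial (Fin k) ℂ))
          ((M.submatrix f' g').det) := by
    intro s f' g'
    rw [Matrix.submatrix_map]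
    exact (RingHom.map_det _ _).symm
  have hd : (M.submatrix f g).det ≠ 0 := by
    intro h0
    apply hdet
    rw [hdetφ, h0, map_zero]
  obtain ⟨a, ha⟩ : ∃ a : Fin k → ℤ,
      MvPolynomial.eval (fun i => (a i : ℂ)) (M.submatrix f g).det ≠ 0 := by
    by_contra hc
    push_neg at hc
    exact hd (mv_int_dense _ hc)
  have hdetev : ∀ {s : ℕ} (f' : Fin s → Fin p) (g' : Fin s → Fin q),
      (((M.map (MvPolynomial.eval (fun i => ((a i : ℤ) : ℂ)))).submatrix f' g')).det =
        MvPolynomial.eval (fun i => ((a i : ℤ) : ℂ)) ((M.submatrix f' g').det) := by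
    intro s f' g'
    rw [Matrix.submatrix_map]
    exact (RingHom.map_det (MvPolynomial.eval (fun i => ((a i : ℤ) : ℂ))) _).symm
  refine ⟨a, le_antisymm ?_ ?_⟩
  · obtain ⟨f', g', hdet'⟩ :=
      exists_minor_det_ne_zero (M.map (MvPolynomial.eval (fun i => ((a i : ℤ) : ℂ))))
    have hd' : (M.submatrix f' g').det ≠ 0 := by
      intro h0
      apply hdet'
      rw [hdetev, h0, map_zero]
    apply le_rank_of_minor _ f' g'
    rw [hdetφ]
    intro h0
    exact hd' (hφ (by simpa using h0))
  · apply le_rank_of_minor _ f g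
    rw [hdetev]
    exact ha
end
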